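/- arXiv:2211.02990 — 5 statements merged into one kernel-verified Lean document; each statement's English description precedes it below -/
import Mathlib

section
/- Let X be a compact metric space and μ_n, μ Borel probability measures on X with μ_n → μ weakly. Then the functionals J(C; μ_n) = E_{μ_n}[d(x,C)²] converge to J(C; μ) uniformly over all nonempty closed subsets C of X. -/
open Metric Filter MeasureTheory

/-- Squared distance functions to sets within `δ` of each other pointwise have squared
versions within `2*(D+1)*δ` when distances are bounded by `D` and `δ ≤ 1`. -/
private lemma sq_diff_bound {a b D δ : ℝ} (ha0 : 0 ≤ a) (hb0 : 0 ≤ b) (haD : a ≤ D)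
    (hbD : b ≤ D + 1) (hab : |a - b| ≤ δ) : |a ^ 2 - b ^ 2| ≤ (2 * D + 1) * δ := by
  have : a ^ 2 - b ^ 2 = (a + b) * (a - b) := by ring
  rw [this, abs_mul]
  have h1 : |a + b| ≤ 2 * D + 1 := by
    rw [abs_of_nonneg (by linarith)]; linarith
  have h2 : (0:ℝ) ≤ |a - b| := abs_nonneg _
  nlinarith [abs_nonneg (a + b)]

/-- Integrability of continuous functions on a compact space w.r.t. a finite measure. -/
private lemma cont_integrable {X : Type*} [MetricSpace X] [CompactSpace X] [MeasurableSpace X]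
    [BorelSpace X] (m : Measure X) [IsFiniteMeasure m] {f : X → ℝ} (hf : Continuous f) :
    Integrable f m :=
  hf.integrable_of_hasCompactSupport (HasCompactSupport.of_compactSpace f)

theorem stmt3 {X : Type*} [MetricSpace X] [CompactSpace X] [MeasurableSpace X] [BorelSpace X]
    (μ : ℕ → Measure X) (ν : Measure X) [∀ n, IsProbabilityMeasure (μ n)]
    [IsProbabilityMeasure ν]
    (hweak : ∀ f : C(X, ℝ), Tendsto (fun n => ∫ x, f x ∂(μ n)) atTop (nhds (∫ x, f x ∂ν))) :
    ∀ ε > (0 : ℝ), ∃ N : ℕ, ∀ n ≥ N, ∀ C : Set X, C.Nonempty → IsClosed C →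
      |(∫ x, infDist x C ^ 2 ∂(μ n)) - ∫ x, infDist x C ^ 2 ∂ν| ≤ ε := by
  intro ε hε
  -- diameter bound
  set D : ℝ := Metric.diam (Set.univ : Set X) with hD
  have hD0 : 0 ≤ D := Metric.diam_nonneg
  have hdist : ∀ x y : X, dist x y ≤ D := fun x y =>
    Metric.dist_le_diam_of_mem isBounded_of_compactSpace (Set.mem_univ x) (Set.mem_univ y)
  -- choose δ
  set δ : ℝ := min 1 (ε / (4 * (2 * D + 1))) with hδdef
  have hδpos : 0 < δ := lt_min one_pos (div_pos hε (by linarith))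
  have hδ1 : δ ≤ 1 := min_le_left _ _
  have hδε : (2 * D + 1) * δ ≤ ε / 4 := by
    have h2 : δ ≤ ε / (4 * (2 * D + 1)) := min_le_right _ _
    have hpos : (0:ℝ) < 4 * (2 * D + 1) := by linarith
    calc (2 * D + 1) * δ ≤ (2 * D + 1) * (ε / (4 * (2 * D + 1))) := by
          apply mul_le_mul_of_nonneg_left h2 (by linarith)
      _ = ε / 4 := by field_simp
  -- finite δ-net
  obtain ⟨t, -, htfin, htcov⟩ := finite_cover_balls_of_compact
    (isCompact_univ : IsCompact (Set.univ : Set X)) hδpos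
  set s : Finset X := htfin.toFinset with hs
  have hscov : ∀ x : X, ∃ p ∈ s, dist x p < δ := by
    intro x
    have := htcov (Set.mem_univ x)
    simp only [Set.mem_iUnion] at this
    obtain ⟨p, hp, hpball⟩ := this
    exact ⟨p, htfin.mem_toFinset.2 hp, mem_ball.1 hpball⟩
  -- continuous maps for each finite subset
  have hcont : ∀ T : Finset X, Continuous (fun x => infDist x (↑T : Set X) ^ 2) :=
    fun T => (continuous_infDist_pt _).pow 2
  -- eventual closeness for every subset of the net
  have hev : ∀ᶠ n in atTop, ∀ T ∈ s.powerset,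
      |(∫ x, infDist x (↑T : Set X) ^ 2 ∂(μ n)) - ∫ x, infDist x (↑T : Set X) ^ 2 ∂ν| ≤ ε / 2 := by
    rw [Finset.eventually_all]
    intro T _
    have h2 := hweak ⟨fun x => infDist x (↑T : Set X) ^ 2, hcont T⟩
    simp only [ContinuousMap.coe_mk] at h2
    have h3 := Metric.tendsto_nhds.1 h2 (ε / 2) (by linarith)
    filter_upwards [h3] with n hn
    rw [Real.dist_eq] at hn
    exact hn.le
  obtain ⟨N, hN⟩ := eventually_atTop.1 hev
  refine ⟨N, fun n hn C hCne hCcl => ?_⟩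
  -- define T, the net points near C
  set T : Finset X := s.filter (fun p => infDist p C ≤ δ) with hT
  have hTs : T ∈ s.powerset := Finset.mem_powerset.2 (Finset.filter_subset _ _)
  have hCcomp : IsCompact C := hCcl.isCompact
  -- pointwise estimate |infDist x C - infDist x T| ≤ δ
  have hkey : ∀ x : X, |infDist x C - infDist x (↑T : Set X)| ≤ δ := by
    intro x
    -- upper: infDist x T ≤ infDist x C + δ
    obtain ⟨c, hcC, hc⟩ := hCcomp.exists_infDist_eq_dist hCne x
    obtain ⟨p, hps, hpc⟩ := hscov c
    have hpT : p ∈ T := by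
      refine Finset.mem_filter.2 ⟨hps, ?_⟩
      calc infDist p C ≤ dist p c := infDist_le_dist_of_mem hcC
        _ ≤ δ := by rw [dist_comm]; exact hpc.le
    have hup : infDist x (↑T : Set X) ≤ infDist x C + δ := by
      calc infDist x (↑T : Set X) ≤ dist x p := infDist_le_dist_of_mem (by exact_mod_cast hpT)
        _ ≤ dist x c + dist c p := dist_triangle _ _ _
        _ ≤ infDist x C + δ := by rw [hc]; linarith [hpc]
    -- lower: infDist x C ≤ infDist x T + δ
    have hTne : (↑T : Set X).Nonempty := ⟨p, by exact_mod_cast hpT⟩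
    obtain ⟨q, hqT, hq⟩ := T.finite_toSet.isCompact.exists_infDist_eq_dist hTne x
    have hqδ : infDist q C ≤ δ := (Finset.mem_filter.1 (Finset.mem_coe.1 hqT)).2
    obtain ⟨c', hc'C, hc'⟩ := hCcomp.exists_infDist_eq_dist hCne q
    have hlow : infDist x C ≤ infDist x (↑T : Set X) + δ := by
      calc infDist x C ≤ dist x c' := infDist_le_dist_of_mem hc'C
        _ ≤ dist x q + dist q c' := dist_triangle _ _ _
        _ ≤ infDist x (↑T : Set X) + δ := by rw [hq]; rw [hc'] at hqδ; linarith
    rw [abs_sub_le_iff]; constructor <;> linarith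
  -- pointwise bound on squared difference
  have hsq : ∀ x : X, |infDist x C ^ 2 - infDist x (↑T : Set X) ^ 2| ≤ (2 * D + 1) * δ := by
    intro x
    obtain ⟨c, hcC⟩ := hCne
    have h1 : infDist x C ≤ D := (infDist_le_dist_of_mem hcC).trans (hdist x c)
    have h2 : infDist x (↑T : Set X) ≤ D + 1 := by
      have := hkey x
      rw [abs_sub_le_iff] at this
      linarith [this.2, hδ1]
    exact sq_diff_bound infDist_nonneg infDist_nonneg h1 h2 (hkey x)
  -- integral bounds
  have hintC : ∀ (m : Measure X) [IsProbabilityMeasure m],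
      Integrable (fun x => infDist x C ^ 2) m := fun m _ =>
    cont_integrable m ((continuous_infDist_pt _).pow 2)
  have hintT : ∀ (m : Measure X) [IsProbabilityMeasure m],
      Integrable (fun x => infDist x (↑T : Set X) ^ 2) m := fun m _ =>
    cont_integrable m (hcont T)
  have hIdiff : ∀ (m : Measure X) [IsProbabilityMeasure m],
      |(∫ x, infDist x C ^ 2 ∂m) - ∫ x, infDist x (↑T : Set X) ^ 2 ∂m| ≤ (2 * D + 1) * δ := by
    intro m hm
    rw [← integral_sub (hintC m) (hintT m)]
    calc |∫ x, (infDist x C ^ 2 - infDist x (↑T : Set X) ^ 2) ∂m|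
        ≤ (2 * D + 1) * δ * (m Set.univ).toReal := by
          rw [← Real.norm_eq_abs]
          apply norm_integral_le_of_norm_le_const
          filter_upwards with x
          rw [Real.norm_eq_abs]; exact hsq x
      _ = (2 * D + 1) * δ := by simp
  have hmid := hN n hn T hTs
  have h1 := hIdiff (μ n)
  have h2 := hIdiff ν
  calc |(∫ x, infDist x C ^ 2 ∂(μ n)) - ∫ x, infDist x C ^ 2 ∂ν|
      ≤ |(∫ x, infDist x C ^ 2 ∂(μ n)) - ∫ x, infDist x (↑T : Set X) ^ 2 ∂(μ n)|
        + |(∫ x, infDist x (↑T : Set X) ^ 2 ∂(μ n)) - ∫ x, infDist x (↑T : Set X) ^ 2 ∂ν|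
        + |(∫ x, infDist x (↑T : Set X) ^ 2 ∂ν) - ∫ x, infDist x C ^ 2 ∂ν| := by
        have := abs_sub_le (∫ x, infDist x C ^ 2 ∂(μ n)) (∫ x, infDist x (↑T : Set X) ^ 2 ∂ν)
          (∫ x, infDist x C ^ 2 ∂ν)
        have h3 := abs_sub_le (∫ x, infDist x C ^ 2 ∂(μ n))
          (∫ x, infDist x (↑T : Set X) ^ 2 ∂(μ n)) (∫ x, infDist x (↑T : Set X) ^ 2 ∂ν)
        linarith
    _ ≤ (2 * D + 1) * δ + ε / 2 + (2 * D + 1) * δ := by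
        rw [abs_sub_comm (∫ x, infDist x (↑T : Set X) ^ 2 ∂ν)]
        linarith
    _ ≤ ε := by linarith
end

section
/- Flashlight lemma: Let X be a compact convex subset of a Hilbert space H with dim H ≥ 2, having nonempty interior containing the origin. Let x_0 ∈ ∂X and let B_δ(x_0) be an open ball not containing 0. Then there exists a convex cone K of rays from the origin with nonempty interior containing x_0 such that ∂X ∩ K ⊆ ∂X ∩ B_δ(x_0). -/
open Filter Topology
theorem stmt7 {H : Type*} [NormedAddCommGroup H] [InnerProductSpace ℝ H]
    [FiniteDimensional ℝ H] (hdim : 2 ≤ Module.finrank ℝ H)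
    (X : Set H) (hXcpt : IsCompact X) (hXconv : Convex ℝ X) (h0 : (0 : H) ∈ interior X)
    (x0 : H) (hx0 : x0 ∈ frontier X) (δ : ℝ) (hδ : 0 < δ) (h0nb : (0 : H) ∉ Metric.ball x0 δ) :
    ∃ K : Set H, (∀ x ∈ K, ∀ r : ℝ, 0 ≤ r → r • x ∈ K) ∧ Convex ℝ K ∧
      x0 ∈ interior K ∧ frontier X ∩ K ⊆ frontier X ∩ Metric.ball x0 δ := by
  have hnhds : X ∈ 𝓝 (0 : H) := mem_interior_iff_mem_nhds.mp h0
  have hg1 : gauge X x0 = 1 := (gauge_eq_one_iff_mem_frontier hXconv hnhds).mpr hx0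
  -- the radial projection is continuous at x0
  have hgc : ContinuousAt (gauge X) x0 := continuousAt_gauge hXconv hnhds
  have hf : ContinuousAt (fun c : H => (gauge X c)⁻¹ • c) x0 := by
    exact ((hgc.inv₀ (by rw [hg1]; norm_num)).smul continuousAt_id)
  have hfx0 : (gauge X x0)⁻¹ • x0 = x0 := by rw [hg1]; simp
  -- choose ε > 0 such that on ball x0 ε, gauge > 0 and projection lands in ball x0 δ
  have hev : ∀ᶠ c in 𝓝 x0, 0 < gauge X c ∧ (gauge X c)⁻¹ • c ∈ Metric.ball x0 δ := by
    have h1 : ∀ᶠ c in 𝓝 x0, 0 < gauge X c :=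
      continuousAt_const.eventually_lt hgc (by rw [hg1]; norm_num)
    have h2 : ∀ᶠ c in 𝓝 x0, (gauge X c)⁻¹ • c ∈ Metric.ball x0 δ := by
      have : Metric.ball x0 δ ∈ 𝓝 ((gauge X x0)⁻¹ • x0) := by
        rw [hfx0]; exact Metric.ball_mem_nhds _ hδ
      exact hf.eventually_mem this
    exact h1.and h2
  obtain ⟨ε, hε, hball⟩ := Metric.eventually_nhds_iff_ball.mp hev
  refine ⟨{y | ∃ r : ℝ, 0 ≤ r ∧ ∃ c ∈ Metric.ball x0 ε, y = r • c}, ?_, ?_, ?_, ?_⟩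
  · rintro x ⟨r, hr, c, hc, rfl⟩ r' hr'
    exact ⟨r' * r, mul_nonneg hr' hr, c, hc, smul_smul r' r c⟩
  · rintro y ⟨r1, hr1, c1, hc1, rfl⟩ z ⟨r2, hr2, c2, hc2, rfl⟩ a b ha hb hab
    by_cases hs : a * r1 + b * r2 = 0
    · have h1 : a * r1 = 0 := by nlinarith [mul_nonneg ha hr1, mul_nonneg hb hr2]
      have h2 : b * r2 = 0 := by nlinarith [mul_nonneg ha hr1, mul_nonneg hb hr2]
      refine ⟨0, le_refl 0, c1, hc1, ?_⟩
      rw [smul_smul, smul_smul, h1, h2]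
      simp
    · have hspos : 0 < a * r1 + b * r2 := by
        rcases lt_or_eq_of_le (add_nonneg (mul_nonneg ha hr1) (mul_nonneg hb hr2)) with h | h
        · exact h
        · exact absurd h.symm hs
      refine ⟨a * r1 + b * r2, hspos.le,
        (a * r1 / (a * r1 + b * r2)) • c1 + (b * r2 / (a * r1 + b * r2)) • c2, ?_, ?_⟩
      · exact (convex_ball x0 ε) hc1 hc2 (div_nonneg (mul_nonneg ha hr1) hspos.le)
          (div_nonneg (mul_nonneg hb hr2) hspos.le) (by field_simp)
      · rw [smul_add, smul_smul, smul_smul, smul_smul, smul_smul]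
        congr 1 <;> congr 1 <;> field_simp <;> ring
  · apply mem_interior_iff_mem_nhds.mpr
    filter_upwards [Metric.ball_mem_nhds x0 hε] with c hc
    exact ⟨1, zero_le_one, c, hc, (one_smul ℝ c).symm⟩
  · rintro y ⟨hyf, r, hr, c, hc, rfl⟩
    refine ⟨hyf, ?_⟩
    obtain ⟨hgpos, hproj⟩ := hball c hc
    have hgy : gauge X (r • c) = 1 := (gauge_eq_one_iff_mem_frontier hXconv hnhds).mpr hyf
    rw [gauge_smul_of_nonneg hr] at hgy
    have hrval : r = (gauge X c)⁻¹ := by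
      field_simp at hgy ⊢
      linarith [hgy, smul_eq_mul r (gauge X c)]
    rw [hrval]
    exact hproj
end

section
/- Under the Aitchison geometry, the ordered simplex Δ_{n,≥} = {p ∈ Δ_n : p₁ ≥ ⋯ ≥ p_n} is a polyhedral convex cone: its image under the isometric log-ratio transform equals {x ∈ ℝ^{n−1} : Ax ≥ 0}, where A is the bidiagonal matrix with entries a_{ij} = √((j+1)/j)·δ_{i,j} − √(j/(j+1))·δ_{i,j+1}. -/
/-- The isometric log-ratio transform on the open unit simplex in `ℝ^(m+1)`. -/
noncomputable def ilr {m : ℕ} (p : Fin (m + 1) → ℝ) : Fin m → ℝ := fun i =>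
  Real.sqrt (((i : ℕ) + 1 : ℝ) / ((i : ℕ) + 2)) *
    Real.log ((∏ j ∈ Finset.Iic (Fin.castSucc i), p j) ^ ((1 : ℝ) / ((i : ℕ) + 1)) / p i.succ)

/-- The ordered open unit simplex: positive entries summing to one, arranged decreasingly. -/
def orderedSimplex (m : ℕ) : Set (Fin (m + 1) → ℝ) :=
  {p | (∀ i, 0 < p i) ∧ (∑ i, p i) = 1 ∧ ∀ i j : Fin (m + 1), i ≤ j → p j ≤ p i}

/-- The bidiagonal matrix `A` with `a_{ij} = √((j+1)/j) δ_{ij} − √(j/(j+1)) δ_{i,j+1}`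
(1-based indices), written here with 0-based indices. -/
noncomputable def Amat (m : ℕ) : Fin m → Fin m → ℝ := fun i j =>
  Real.sqrt (((j : ℕ) + 2 : ℝ) / ((j : ℕ) + 1)) * (if i = j then 1 else 0) -
    Real.sqrt (((j : ℕ) + 1 : ℝ) / ((j : ℕ) + 2)) * (if (i : ℕ) = (j : ℕ) + 1 then 1 else 0)

lemma sum_Iic_eq {n : ℕ} (g : Fin n → ℝ) (G : ℕ → ℝ) (hG : ∀ j : Fin n, G (j : ℕ) = g j)
    (i : Fin n) : ∑ j ∈ Finset.Iic i, g j = ∑ k ∈ Finset.range ((i : ℕ) + 1), G k := by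
  have hmap : (Finset.Iic i).map Fin.valEmbedding = Finset.range ((i : ℕ) + 1) := by
    ext k
    simp only [Finset.mem_map, Finset.mem_Iic, Finset.mem_range, Fin.valEmbedding_apply]
    constructor
    · rintro ⟨j, hj, rfl⟩; exact Nat.lt_succ_of_le (Fin.le_iff_val_le_val.mp hj)
    · intro hk
      exact ⟨⟨k, lt_of_lt_of_le hk i.isLt⟩,
        by simpa [Fin.le_iff_val_le_val] using Nat.lt_succ_iff.mp hk, rfl⟩
  rw [← hmap, Finset.sum_map]
  simp [hG]

lemma Amat_row {m : ℕ} (x : Fin m → ℝ) (X : ℕ → ℝ) (hX : ∀ j : Fin m, X (j : ℕ) = x j)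
    (i : Fin m) :
    ∑ j : Fin m, Amat m i j * x j
    = Real.sqrt (((i : ℕ) + 2 : ℝ) / ((i : ℕ) + 1)) * x i -
      Real.sqrt (((i : ℕ) : ℝ) / ((i : ℕ) + 1)) * X ((i : ℕ) - 1) := by
  have h1 : ∀ j : Fin m, Amat m i j * x j
      = (if i = j then Real.sqrt (((j : ℕ) + 2 : ℝ) / ((j : ℕ) + 1)) * x j else 0) -
        (if (i : ℕ) = (j : ℕ) + 1 then Real.sqrt (((j : ℕ) + 1 : ℝ) / ((j : ℕ) + 2)) * x j else 0) := by
    intro j; unfold Amat; split_ifs <;> ring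
  rw [Finset.sum_congr rfl (fun j _ => h1 j), Finset.sum_sub_distrib, Finset.sum_ite_eq]
  simp only [Finset.mem_univ, if_true]
  congr 1
  rcases Nat.eq_zero_or_eq_succ_pred (i : ℕ) with h0 | hs
  · rw [Finset.sum_eq_zero]
    · rw [h0]; simp
    · intro j _; rw [if_neg]; omega
  · set k := (i : ℕ) - 1 with hk
    have hkm : k < m := by omega
    rw [Finset.sum_eq_single (⟨k, hkm⟩ : Fin m)]
    · rw [if_pos (by simp [hk]; omega)]
      rw [hX ⟨k, hkm⟩]
      congr 2 <;> · simp only [hk]; push_cast [Nat.cast_sub (by omega : 1 ≤ (i:ℕ))]; ring_nf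
    · intro j _ hj; rw [if_neg]; intro hc; apply hj; apply Fin.ext; simp [hk]; omega
    · intro h; exact absurd (Finset.mem_univ _) h

lemma ilr_eq {m : ℕ} (p : Fin (m + 1) → ℝ) (hp : ∀ i, 0 < p i) (Λ : ℕ → ℝ)
    (hΛ : ∀ j : Fin (m + 1), Λ (j : ℕ) = Real.log (p j)) (i : Fin m) :
    ilr p i = Real.sqrt (((i : ℕ) + 1 : ℝ) / ((i : ℕ) + 2)) *
      ((∑ k ∈ Finset.range ((i : ℕ) + 1), Λ k) / ((i : ℕ) + 1) - Λ ((i : ℕ) + 1)) := by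
  have hprod : 0 < ∏ j ∈ Finset.Iic (Fin.castSucc i), p j :=
    Finset.prod_pos fun j _ => hp j
  have hlog : Real.log ((∏ j ∈ Finset.Iic (Fin.castSucc i), p j) ^ ((1 : ℝ) / ((i : ℕ) + 1)) / p i.succ)
      = (1 / ((i : ℕ) + 1)) * Real.log (∏ j ∈ Finset.Iic (Fin.castSucc i), p j)
        - Real.log (p i.succ) := by
    rw [Real.log_div (by positivity) (hp i.succ).ne', Real.log_rpow hprod]
  have hsum : Real.log (∏ j ∈ Finset.Iic (Fin.castSucc i), p j)
      = ∑ k ∈ Finset.range ((i : ℕ) + 1), Λ k := by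
    rw [Real.log_prod fun j _ => (hp j).ne']
    exact sum_Iic_eq _ _ hΛ (Fin.castSucc i)
  have hsucc : Λ ((i : ℕ) + 1) = Real.log (p i.succ) := by
    have := hΛ i.succ; simpa using this
  rw [ilr, hlog, hsum, hsucc]
  ring

lemma sqrt_mul_sqrt_inv (a b : ℝ) (ha : 0 < a) (hb : 0 < b) :
    Real.sqrt (a / b) * Real.sqrt (b / a) = 1 := by
  rw [← Real.sqrt_mul (by positivity)]
  rw [show a / b * (b / a) = 1 by field_simp]
  exact Real.sqrt_one

lemma key {m : ℕ} (p : Fin (m + 1) → ℝ) (hp : ∀ i, 0 < p i) (Λ : ℕ → ℝ)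
    (hΛ : ∀ j : Fin (m + 1), Λ (j : ℕ) = Real.log (p j)) (i : Fin m) :
    ∑ j : Fin m, Amat m i j * ilr p j = Λ (i : ℕ) - Λ ((i : ℕ) + 1) := by
  set ILR : ℕ → ℝ := fun k => if h : k < m then ilr p ⟨k, h⟩ else 0 with hILR
  have hX : ∀ j : Fin m, ILR (j : ℕ) = ilr p j := by
    intro j; simp [hILR, j.isLt, Fin.eta]
  rw [Amat_row (ilr p) ILR hX i]
  rcases Nat.eq_zero_or_eq_succ_pred (i : ℕ) with h0 | hs
  · rw [ilr_eq p hp Λ hΛ i, h0]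
    push_cast [h0]
    rw [show ((0:ℝ))/(0+1) = 0 by norm_num, Real.sqrt_zero]
    rw [show ((0:ℝ)+2)/(0+1) = 2/1 by norm_num, show ((0:ℝ)+1)/(0+2) = 1/2 by norm_num]
    rw [← mul_assoc, sqrt_mul_sqrt_inv 2 1 (by norm_num) (by norm_num)]
    simp
  · set k := (i : ℕ) - 1 with hk
    have hkm : k < m := by omega
    have hik : (i : ℕ) = k + 1 := hs
    have hILRk : ILR ((i : ℕ) - 1) = ilr p ⟨k, hkm⟩ := by simp [hILR, hk, hkm]; rw [dif_pos (by omega)]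
    rw [hILRk, ilr_eq p hp Λ hΛ i, ilr_eq p hp Λ hΛ ⟨k, hkm⟩]
    have hvk : ((⟨k, hkm⟩ : Fin m) : ℕ) = k := rfl
    rw [hvk, hik]
    push_cast
    set T : ℝ := (k : ℝ) with hT
    have hT0 : (0:ℝ) ≤ T := Nat.cast_nonneg k
    have e1 : Real.sqrt ((T + 1 + 2) / (T + 1 + 1)) * (Real.sqrt ((T + 1 + 1) / (T + 1 + 2)) *
        ((∑ x ∈ Finset.range (k + 1 + 1), Λ x) / (T + 1 + 1) - Λ (k + 1 + 1)))
        = (∑ x ∈ Finset.range (k + 1 + 1), Λ x) / (T + 2) - Λ (k + 2) := by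
      rw [← mul_assoc, sqrt_mul_sqrt_inv _ _ (by positivity) (by positivity)]
      ring_nf
    have e2 : Real.sqrt ((T + 1) / (T + 1 + 1)) * (Real.sqrt ((T + 1) / (T + 2)) *
        ((∑ x ∈ Finset.range (k + 1), Λ x) / (T + 1) - Λ (k + 1)))
        = ((T + 1) / (T + 2)) * ((∑ x ∈ Finset.range (k + 1), Λ x) / (T + 1) - Λ (k + 1)) := by
      rw [← mul_assoc]
      congr 1
      rw [show (T + 1) / (T + 1 + 1) = (T+1)/(T+2) by ring_nf]
      exact Real.mul_self_sqrt (by positivity)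
    rw [e1, e2, Finset.sum_range_succ]
    have h2 : T + 2 ≠ 0 := by positivity
    have h1 : T + 1 ≠ 0 := by positivity
    field_simp
    ring

lemma amat_inj {m : ℕ} (x y : Fin m → ℝ)
    (h : ∀ i, ∑ j : Fin m, Amat m i j * x j = ∑ j : Fin m, Amat m i j * y j) : x = y := by
  set X : ℕ → ℝ := fun k => if h : k < m then x ⟨k, h⟩ else 0 with hXdef
  set Y : ℕ → ℝ := fun k => if h : k < m then y ⟨k, h⟩ else 0 with hYdef
  have hX : ∀ j : Fin m, X (j : ℕ) = x j := fun j => by simp [hXdef, j.isLt, Fin.eta]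
  have hY : ∀ j : Fin m, Y (j : ℕ) = y j := fun j => by simp [hYdef, j.isLt, Fin.eta]
  have heq : ∀ i : Fin m,
      Real.sqrt (((i : ℕ) + 2 : ℝ) / ((i : ℕ) + 1)) * x i -
        Real.sqrt (((i : ℕ) : ℝ) / ((i : ℕ) + 1)) * X ((i : ℕ) - 1)
      = Real.sqrt (((i : ℕ) + 2 : ℝ) / ((i : ℕ) + 1)) * y i -
        Real.sqrt (((i : ℕ) : ℝ) / ((i : ℕ) + 1)) * Y ((i : ℕ) - 1) := by
    intro i; rw [← Amat_row x X hX i, ← Amat_row y Y hY i]; exact h i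
  have hcoef : ∀ k : ℕ, Real.sqrt (((k : ℕ) + 2 : ℝ) / ((k : ℕ) + 1)) ≠ 0 := by
    intro k
    have : (0:ℝ) < ((k : ℕ) + 2 : ℝ) / ((k : ℕ) + 1) := by positivity
    exact (Real.sqrt_pos.mpr this).ne'
  have claim : ∀ k : ℕ, X k = Y k := by
    intro k
    induction k with
    | zero =>
      by_cases hk : 0 < m
      · simp only [hXdef, hYdef, dif_pos hk]
        have h1 := heq ⟨0, hk⟩
        simp only [Fin.val_mk, Nat.cast_zero] at h1
        rw [show ((0:ℝ))/(0+1) = 0 by norm_num, Real.sqrt_zero] at h1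
        simp only [zero_mul, sub_zero] at h1
        exact mul_left_cancel₀ (by simpa using hcoef 0) h1
      · simp only [hXdef, hYdef, dif_neg hk]
    | succ t ih =>
      by_cases hk : t + 1 < m
      · simp only [hXdef, hYdef, dif_pos hk]
        have h1 := heq ⟨t + 1, hk⟩
        simp only [Fin.val_mk, Nat.add_sub_cancel] at h1
        rw [ih] at h1
        have h2 := hcoef (t + 1)
        push_cast at h1 h2
        have h3 : Real.sqrt (((t:ℝ) + 1 + 2) / ((t:ℝ) + 1 + 1)) * x ⟨t + 1, hk⟩
            = Real.sqrt (((t:ℝ) + 1 + 2) / ((t:ℝ) + 1 + 1)) * y ⟨t + 1, hk⟩ := by linarith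
        exact mul_left_cancel₀ h2 h3
      · simp only [hXdef, hYdef, dif_neg hk]
  funext j
  rw [← hX j, ← hY j, claim]

theorem stmt13 (m : ℕ) :
    ilr '' orderedSimplex m = {x : Fin m → ℝ | ∀ i, 0 ≤ ∑ j, Amat m i j * x j} := by
  ext x
  simp only [Set.mem_image, Set.mem_setOf_eq]
  constructor
  · rintro ⟨p, ⟨hpos, hsum, hmono⟩, rfl⟩ i
    set Λ : ℕ → ℝ := fun k => if h : k < m + 1 then Real.log (p ⟨k, h⟩) else 0 with hΛdef
    have hΛ : ∀ j : Fin (m + 1), Λ (j : ℕ) = Real.log (p j) := fun j => by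
      simp [hΛdef, j.isLt, Fin.eta]; intro h; have := j.isLt; omega
    rw [key p hpos Λ hΛ i]
    have e1 : Λ (i : ℕ) = Real.log (p (Fin.castSucc i)) := by
      have := hΛ (Fin.castSucc i); simpa using this
    have e2 : Λ ((i : ℕ) + 1) = Real.log (p i.succ) := by
      have := hΛ i.succ; simpa using this
    rw [e1, e2, sub_nonneg]
    exact Real.log_le_log (hpos i.succ)
      (hmono (Fin.castSucc i) i.succ (le_of_lt Fin.castSucc_lt_succ))
  · intro hx
    set d : ℕ → ℝ := fun t => if h : t < m then ∑ j : Fin m, Amat m ⟨t, h⟩ j * x j else 0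
      with hddef
    have hd : ∀ t, 0 ≤ d t := by
      intro t
      by_cases h : t < m
      · simp only [hddef, dif_pos h]; exact hx ⟨t, h⟩
      · simp only [hddef, dif_neg h]; exact le_refl 0
    set L : ℕ → ℝ := fun r => -(∑ t ∈ Finset.range r, d t) with hLdef
    have hLmono : ∀ a b : ℕ, a ≤ b → L b ≤ L a := by
      intro a b hab
      apply neg_le_neg
      exact Finset.sum_le_sum_of_subset_of_nonneg (Finset.range_subset_range.mpr hab)
        fun t _ _ => hd t
    set c : ℝ := ∑ k : Fin (m + 1), Real.exp (L (k : ℕ)) with hcdef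
    have hc : 0 < c := Finset.sum_pos (fun k _ => Real.exp_pos _) Finset.univ_nonempty
    set p : Fin (m + 1) → ℝ := fun k => Real.exp (L (k : ℕ)) / c with hpdef
    have hpos : ∀ k, 0 < p k := fun k => div_pos (Real.exp_pos _) hc
    refine ⟨p, ⟨hpos, ?_, ?_⟩, ?_⟩
    · rw [hpdef, ← Finset.sum_div, ← hcdef, div_self hc.ne']
    · intro i j hij
      exact (div_le_div_iff_of_pos_right hc).mpr (Real.exp_le_exp.mpr (hLmono _ _ hij))
    · apply amat_inj
      intro i
      set Λ : ℕ → ℝ := fun k => L k - Real.log c with hΛdef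
      have hΛ : ∀ j : Fin (m + 1), Λ (j : ℕ) = Real.log (p j) := fun j => by
        simp only [hΛdef, hpdef]
        rw [Real.log_div (Real.exp_pos _).ne' hc.ne', Real.log_exp]
      rw [key p hpos Λ hΛ i]
      have e : Λ (i : ℕ) - Λ ((i : ℕ) + 1) = d (i : ℕ) := by
        simp only [hΛdef, hLdef]
        rw [Finset.sum_range_succ]; ring
      rw [e, hddef]
      simp only [dif_pos i.isLt, Fin.eta]
end

section
/- Dropping the orthogonality constraint in Euclidean PCA of projected data: Let H be a finite-dimensional real Hilbert space, P a subspace, and x₁,…,x_N, x̄ ∈ H. Then inf over unit vectors p ∈ P^⊥ of (1/N)Σᵢ inf_{z ∈ span{p}} ||Π_{P^⊥}(xᵢ − x̄) − z||² equals the inf over all unit vectors p ∈ H of the same quantity; moreover if some xᵢ − x̄ ∉ P then every minimizer over all unit vectors lies in P^⊥. -/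
open RealInnerProductSpace

private lemma aux_inf {H : Type*} [NormedAddCommGroup H] [InnerProductSpace ℝ H]
    (p y : H) (hp : ‖p‖ = 1) :
    (⨅ z : Submodule.span ℝ {p}, ‖y - (z : H)‖ ^ 2) = ‖y‖ ^ 2 - ⟪y, p⟫ ^ 2 := by
  have hbdd : BddBelow (Set.range fun z : Submodule.span ℝ {p} => ‖y - (z : H)‖ ^ 2) :=
    ⟨0, by rintro r ⟨z, rfl⟩; positivity⟩
  apply le_antisymm
  · refine le_trans (ciInf_le hbdd ⟨⟪y, p⟫ • p, Submodule.mem_span_singleton.mpr ⟨_, rfl⟩⟩) ?_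
    rw [@norm_sub_sq_real, real_inner_smul_right, norm_smul, Real.norm_eq_abs, hp]
    nlinarith [sq_abs ⟪y, p⟫]
  · refine le_ciInf ?_
    rintro ⟨z, hz⟩
    obtain ⟨c, rfl⟩ := Submodule.mem_span_singleton.mp hz
    simp only
    rw [@norm_sub_sq_real, real_inner_smul_right, norm_smul, Real.norm_eq_abs, hp]
    nlinarith [sq_nonneg (c - ⟪y, p⟫), sq_abs c]

theorem stmt16 {H : Type*} [NormedAddCommGroup H] [InnerProductSpace ℝ H]
    [FiniteDimensional ℝ H]
    (P : Submodule ℝ H) (N : ℕ) (x : Fin N → H) (xbar : H)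
    (f : H → ℝ)
    (hf : f = fun p => (1 / (N : ℝ)) * ∑ i, ⨅ z : Submodule.span ℝ {p},
      ‖(Submodule.orthogonalProjectionOnto Pᗮ (x i - xbar) : H) - (z : H)‖ ^ 2) :
    sInf (f '' {p | p ∈ Pᗮ ∧ ‖p‖ = 1}) = sInf (f '' {p | ‖p‖ = 1}) ∧
    ((∃ i, x i - xbar ∉ P) →
      ∀ p : H, ‖p‖ = 1 → (∀ q : H, ‖q‖ = 1 → f p ≤ f q) → p ∈ Pᗮ) := by
  set y : Fin N → H := fun i => (Submodule.orthogonalProjectionOnto Pᗮ (x i - xbar) : H) with hy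
  have hyP : ∀ i, y i ∈ Pᗮ := fun i => SetLike.coe_mem _
  -- formula for f on unit vectors
  have hfy : ∀ p : H, ‖p‖ = 1 →
      f p = (1 / (N : ℝ)) * ∑ i, (‖y i‖ ^ 2 - ⟪y i, p⟫ ^ 2) := by
    intro p hp
    rw [hf]
    simp only
    congr 1
    exact Finset.sum_congr rfl fun i _ => aux_inf p (y i) hp
  -- monotonicity
  have hmono : ∀ p q : H, ‖p‖ = 1 → ‖q‖ = 1 →
      (∑ i, ⟪y i, p⟫ ^ 2) ≤ (∑ i, ⟪y i, q⟫ ^ 2) → f q ≤ f p := by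
    intro p q hp hq h
    rw [hfy p hp, hfy q hq, Finset.sum_sub_distrib, Finset.sum_sub_distrib]
    have : (0:ℝ) ≤ 1 / (N : ℝ) := by positivity
    apply mul_le_mul_of_nonneg_left _ this
    linarith
  have hstrict : ∀ p q : H, ‖p‖ = 1 → ‖q‖ = 1 → 0 < N →
      (∑ i, ⟪y i, p⟫ ^ 2) < (∑ i, ⟪y i, q⟫ ^ 2) → f q < f p := by
    intro p q hp hq hN h
    rw [hfy p hp, hfy q hq, Finset.sum_sub_distrib, Finset.sum_sub_distrib]
    have hN' : (0:ℝ) < 1 / (N : ℝ) := by positivity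
    apply mul_lt_mul_of_pos_left _ hN'
    linarith
  -- inner product only sees the Pᗮ component
  have hinner : ∀ (i : Fin N) (p : H), ⟪y i, p⟫ = ⟪y i, (Submodule.orthogonalProjectionOnto Pᗮ p : H)⟫ := by
    intro i p
    conv_lhs => rw [← (show (Submodule.orthogonalProjectionOnto P p : H) + (Submodule.orthogonalProjectionOnto Pᗮ p : H) = p by simpa only [Submodule.starProjection_apply] using P.starProjection_add_starProjection_orthogonal p)]
    rw [inner_add_right]
    have h0 : ⟪y i, (Submodule.orthogonalProjectionOnto P p : H)⟫ = 0 := by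
      rw [real_inner_comm]
      exact (Submodule.mem_orthogonal P (y i)).mp (hyP i) _ (SetLike.coe_mem _)
    rw [h0, zero_add]
  -- norm splitting
  have hns : ∀ p : H, ‖p‖ = 1 →
      ‖(Submodule.orthogonalProjectionOnto P p : H)‖ ^ 2 + ‖(Submodule.orthogonalProjectionOnto Pᗮ p : H)‖ ^ 2 = 1 := by
    intro p hp
    set a : H := (Submodule.orthogonalProjectionOnto P p : H)
    set b : H := (Submodule.orthogonalProjectionOnto Pᗮ p : H)
    have hab : ⟪a, b⟫ = 0 :=
      (Submodule.mem_orthogonal P b).mp (SetLike.coe_mem _) a (SetLike.coe_mem _)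
    have hsum : a + b = p := (by simpa only [Submodule.starProjection_apply] using P.starProjection_add_starProjection_orthogonal p)
    have := norm_add_sq_real a b
    rw [hsum, hp] at this
    nlinarith
  -- strict improvement when p is a minimizer candidate not in Pᗮ and some y i₀ ≠ 0
  have improve : ∀ p : H, ‖p‖ = 1 → p ∉ Pᗮ → ∀ i₀ : Fin N, y i₀ ≠ 0 →
      ∃ q : H, ‖q‖ = 1 ∧ f q < f p := by
    intro p hp hpP i₀ hi₀
    have hN : 0 < N := i₀.pos
    by_cases hg : (∑ i, ⟪y i, p⟫ ^ 2) = 0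
    · -- use q = y i₀ / ‖y i₀‖
      have hn : ‖y i₀‖ ≠ 0 := norm_ne_zero_iff.mpr hi₀
      refine ⟨‖y i₀‖⁻¹ • y i₀, ?_, ?_⟩
      · rw [norm_smul, Real.norm_eq_abs, abs_inv, abs_norm, inv_mul_cancel₀ hn]
      · refine hstrict p _ hp ?_ hN ?_
        · rw [norm_smul, Real.norm_eq_abs, abs_inv, abs_norm, inv_mul_cancel₀ hn]
        · rw [hg]
          have hterm : (0:ℝ) < ⟪y i₀, ‖y i₀‖⁻¹ • y i₀⟫ ^ 2 := by
            rw [real_inner_smul_right, real_inner_self_eq_norm_sq]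
            have : 0 < ‖y i₀‖ := norm_pos_iff.mpr hi₀
            positivity
          calc (0:ℝ) < ⟪y i₀, ‖y i₀‖⁻¹ • y i₀⟫ ^ 2 := hterm
            _ ≤ ∑ i, ⟪y i, ‖y i₀‖⁻¹ • y i₀⟫ ^ 2 :=
              Finset.single_le_sum (f := fun i => ⟪y i, ‖y i₀‖⁻¹ • y i₀⟫ ^ 2)
                (fun i _ => sq_nonneg _) (Finset.mem_univ i₀)
    · -- ∑ > 0, so b ≠ 0 and ‖b‖ < 1
      set b : H := (Submodule.orthogonalProjectionOnto Pᗮ p : H) with hb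
      have hgpos : 0 < ∑ i, ⟪y i, p⟫ ^ 2 :=
        lt_of_le_of_ne (Finset.sum_nonneg fun i _ => sq_nonneg _) (Ne.symm hg)
      have hbne : b ≠ 0 := by
        intro h0
        apply hg
        apply Finset.sum_eq_zero
        intro i _
        rw [hinner i p, ← hb, h0, inner_zero_right]
        simp
      have hane : (Submodule.orthogonalProjectionOnto P p : H) ≠ 0 := by
        intro h0
        apply hpP
        have hsum : (Submodule.orthogonalProjectionOnto P p : H) + b = p :=
          (by simpa only [Submodule.starProjection_apply] using P.starProjection_add_starProjection_orthogonal p)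
        rw [h0, zero_add] at hsum
        rw [← hsum]
        exact SetLike.coe_mem _
      have hbpos : 0 < ‖b‖ := norm_pos_iff.mpr hbne
      have hblt : ‖b‖ ^ 2 < 1 := by
        have := hns p hp
        have hapos : 0 < ‖(Submodule.orthogonalProjectionOnto P p : H)‖ := norm_pos_iff.mpr hane
        nlinarith
      refine ⟨‖b‖⁻¹ • b, ?_, ?_⟩
      · rw [norm_smul, Real.norm_eq_abs, abs_inv, abs_norm, inv_mul_cancel₀ hbpos.ne']
      · refine hstrict p _ hp ?_ hN ?_
        · rw [norm_smul, Real.norm_eq_abs, abs_inv, abs_norm, inv_mul_cancel₀ hbpos.ne']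
        · have hq : (∑ i, ⟪y i, ‖b‖⁻¹ • b⟫ ^ 2) = (‖b‖⁻¹)^2 * ∑ i, ⟪y i, p⟫ ^ 2 := by
            rw [Finset.mul_sum]
            refine Finset.sum_congr rfl fun i _ => ?_
            rw [real_inner_smul_right, hinner i p, ← hb, mul_pow]
          rw [hq]
          have h1 : 1 < (‖b‖⁻¹)^2 := by
            rw [inv_pow]
            rw [lt_inv_comm₀ one_pos (by positivity)]
            simpa using hblt
          nlinarith
  -- nonstrict: for any unit p there is a unit q in Pᗮ with f q ≤ f p (if Pᗮ ≠ ⊥)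
  have weak : Pᗮ ≠ ⊥ → ∀ p : H, ‖p‖ = 1 → ∃ q ∈ Pᗮ, ‖q‖ = 1 ∧ f q ≤ f p := by
    intro hPbot p hp
    set b : H := (Submodule.orthogonalProjectionOnto Pᗮ p : H) with hb
    by_cases hbne : b = 0
    · obtain ⟨v, hv, hvne⟩ := Submodule.ne_bot_iff _ |>.mp hPbot
      have hn : ‖v‖ ≠ 0 := norm_ne_zero_iff.mpr hvne
      refine ⟨‖v‖⁻¹ • v, Submodule.smul_mem _ _ hv, ?_, ?_⟩
      · rw [norm_smul, Real.norm_eq_abs, abs_inv, abs_norm, inv_mul_cancel₀ hn]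
      · refine hmono p _ hp ?_ ?_
        · rw [norm_smul, Real.norm_eq_abs, abs_inv, abs_norm, inv_mul_cancel₀ hn]
        · have : (∑ i, ⟪y i, p⟫ ^ 2) = 0 := by
            apply Finset.sum_eq_zero
            intro i _
            rw [hinner i p, ← hb, hbne, inner_zero_right]
            simp
          rw [this]
          exact Finset.sum_nonneg fun i _ => sq_nonneg _
    · have hbpos : 0 < ‖b‖ := norm_pos_iff.mpr hbne
      have hble : ‖b‖ ^ 2 ≤ 1 := by
        have := hns p hp
        nlinarith [sq_nonneg ‖(Submodule.orthogonalProjectionOnto P p : H)‖]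
      refine ⟨‖b‖⁻¹ • b, Submodule.smul_mem _ _ (SetLike.coe_mem _), ?_, ?_⟩
      · rw [norm_smul, Real.norm_eq_abs, abs_inv, abs_norm, inv_mul_cancel₀ hbpos.ne']
      · refine hmono p _ hp ?_ ?_
        · rw [norm_smul, Real.norm_eq_abs, abs_inv, abs_norm, inv_mul_cancel₀ hbpos.ne']
        · have hq : (∑ i, ⟪y i, ‖b‖⁻¹ • b⟫ ^ 2) = (‖b‖⁻¹)^2 * ∑ i, ⟪y i, p⟫ ^ 2 := by
            rw [Finset.mul_sum]
            refine Finset.sum_congr rfl fun i _ => ?_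
            rw [real_inner_smul_right, hinner i p, ← hb, mul_pow]
          rw [hq]
          have h1 : 1 ≤ (‖b‖⁻¹)^2 := by
            rw [inv_pow]
            rw [le_inv_comm₀ one_pos (by positivity)]
            simpa using hble
          nlinarith [Finset.sum_nonneg (fun i (_ : i ∈ Finset.univ) => sq_nonneg ⟪y i, p⟫)]
  have hf0 : ∀ p : H, 0 ≤ f p := by
    intro p
    rw [hf]
    simp only
    apply mul_nonneg (by positivity)
    apply Finset.sum_nonneg
    intro i _
    exact Real.iInf_nonneg fun z => by positivity
  constructor
  · by_cases hPbot : Pᗮ = ⊥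
    · -- degenerate case: all y i = 0, f = 0 on unit vectors
      have hy0 : ∀ i, y i = 0 := by
        intro i
        have := hyP i
        rwa [hPbot, Submodule.mem_bot] at this
      have hfz : ∀ p : H, ‖p‖ = 1 → f p = 0 := by
        intro p hp
        rw [hfy p hp]
        simp [hy0]
      have hS1 : (f '' {p : H | p ∈ Pᗮ ∧ ‖p‖ = 1}) = ∅ := by
        rw [Set.image_eq_empty]
        ext p
        simp only [Set.mem_setOf_eq, Set.mem_empty_iff_false, iff_false, not_and]
        intro hpmem
        rw [hPbot, Submodule.mem_bot] at hpmem
        simp [hpmem]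
      rw [hS1, Real.sInf_empty]
      by_cases hS2 : ∃ p : H, ‖p‖ = 1
      · obtain ⟨p, hp⟩ := hS2
        have : (f '' {p : H | ‖p‖ = 1}) = {0} := by
          apply Set.eq_singleton_iff_nonempty_unique_mem.mpr
          constructor
          · exact ⟨f p, ⟨p, hp, rfl⟩⟩
          · rintro r ⟨q, hq, rfl⟩
            exact hfz q hq
        rw [this, csInf_singleton]
      · have : ({p : H | ‖p‖ = 1} : Set H) = ∅ := by
          ext p; simp only [Set.mem_setOf_eq, Set.mem_empty_iff_false, iff_false]
          exact fun h => hS2 ⟨p, h⟩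
        rw [this, Set.image_empty, Real.sInf_empty]
    · -- main case
      obtain ⟨v, hv, hvne⟩ := Submodule.ne_bot_iff _ |>.mp hPbot
      have hn : ‖v‖ ≠ 0 := norm_ne_zero_iff.mpr hvne
      have hvunit : ‖‖v‖⁻¹ • v‖ = 1 := by
        rw [norm_smul, Real.norm_eq_abs, abs_inv, abs_norm, inv_mul_cancel₀ hn]
      have hS1ne : (f '' {p : H | p ∈ Pᗮ ∧ ‖p‖ = 1}).Nonempty :=
        ⟨f (‖v‖⁻¹ • v), ⟨‖v‖⁻¹ • v, ⟨Submodule.smul_mem _ _ hv, hvunit⟩, rfl⟩⟩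
      have hS2ne : (f '' {p : H | ‖p‖ = 1}).Nonempty :=
        ⟨f (‖v‖⁻¹ • v), ⟨‖v‖⁻¹ • v, hvunit, rfl⟩⟩
      have hbdd1 : BddBelow (f '' {p : H | p ∈ Pᗮ ∧ ‖p‖ = 1}) :=
        ⟨0, by rintro r ⟨q, _, rfl⟩; exact hf0 q⟩
      have hbdd2 : BddBelow (f '' {p : H | ‖p‖ = 1}) :=
        ⟨0, by rintro r ⟨q, _, rfl⟩; exact hf0 q⟩
      apply le_antisymm
      · apply le_csInf hS2ne
        rintro r ⟨p, hp, rfl⟩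
        obtain ⟨q, hqP, hq, hfq⟩ := weak hPbot p hp
        exact le_trans (csInf_le hbdd1 ⟨q, ⟨hqP, hq⟩, rfl⟩) hfq
      · exact csInf_le_csInf hbdd2 hS1ne (Set.image_mono fun p hp => hp.2)
  · rintro ⟨i₀, hi₀⟩ p hp hmin
    by_contra hpP
    have hyne : y i₀ ≠ 0 := by
      intro h0
      apply hi₀
      have : Submodule.orthogonalProjectionOnto Pᗮ (x i₀ - xbar) = 0 := Submodule.coe_eq_zero.mp h0
      rw [Submodule.orthogonalProjectionOnto_eq_zero_iff] at this
      rwa [Submodule.orthogonal_orthogonal] at this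
    obtain ⟨q, hq, hlt⟩ := improve p hp hpP i₀ hyne
    exact absurd (hmin q hq) (not_le.mpr hlt)
end

section
/- Let X be a compact convex subset of ℝ^d with nonempty interior, x̄ ∈ int(X), and x̄_n → x̄ in X. For fixed k ≥ 1, the families 𝔠_n = CC_{x̄_n,k}(X) converge to 𝔠 = CC_{x̄,k}(X) in the Kuratowski sense with respect to the Hausdorff distance: (i) every C ∈ 𝔠 is a Hausdorff limit of sets C_n ∈ 𝔠_n, and (ii) every Hausdorff accumulation point of a sequence C_n ∈ 𝔠_n belongs to 𝔠. -/
open Metric Filter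

/-- The affine dimension of a set: the rank of the direction of its affine span. -/
noncomputable def adim {H : Type*} [NormedAddCommGroup H] [NormedSpace ℝ H] (s : Set H) : ℕ :=
  Module.finrank ℝ (affineSpan ℝ s).direction

/-- The family `CC_{x̄,k}(X)` of closed convex subsets of `X` containing `x̄` with affine
dimension at most `k`. -/
def CCset {d : ℕ} (X : Set (EuclideanSpace ℝ (Fin d))) (xbar : EuclideanSpace ℝ (Fin d))
    (k : ℕ) : Set (Set (EuclideanSpace ℝ (Fin d))) :=
  {C | C ⊆ X ∧ IsClosed C ∧ Convex ℝ C ∧ xbar ∈ C ∧ adim C ≤ k}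

section Aux

variable {d k : ℕ}

local notation "E" => EuclideanSpace ℝ (Fin d)

/-- If `adim s` exceeds `k`, one can find `k+2` affinely independent points in `s`. -/
lemma exists_affineIndependent_points {s : Set E} (hs : ¬ adim s ≤ k) :
    ∃ p : Fin (k + 2) → E, (∀ i, p i ∈ s) ∧ AffineIndependent ℝ p := by
  classical
  have hsne : s.Nonempty := by
    by_contra h
    rw [Set.not_nonempty_iff_eq_empty] at h
    subst h
    apply hs
    rw [adim, AffineSubspace.span_empty, AffineSubspace.direction_bot]
    simp
  obtain ⟨t, hts, htspan, htind⟩ := exists_affineIndependent ℝ E s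
  have htfin : t.Finite := finite_set_of_fin_dim_affineIndependent ℝ htind
  haveI : Fintype t := htfin.fintype
  have htne : t.Nonempty := by
    by_contra h
    rw [Set.not_nonempty_iff_eq_empty] at h
    subst h
    rw [AffineSubspace.span_empty] at htspan
    obtain ⟨x, hx⟩ := hsne
    exact AffineSubspace.notMem_bot ℝ E x (htspan ▸ subset_affineSpan ℝ s hx)
  haveI : Nonempty t := htne.to_subtype
  have hcard : Module.finrank ℝ (vectorSpan ℝ (Set.range ((↑) : t → E))) + 1
      = Fintype.card t := htind.finrank_vectorSpan_add_one
  rw [Subtype.range_coe] at hcard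
  have hdim : k + 1 ≤ Module.finrank ℝ (vectorSpan ℝ t) := by
    have h1 : (affineSpan ℝ t).direction = (affineSpan ℝ s).direction := by rw [htspan]
    have h2 : Module.finrank ℝ (vectorSpan ℝ t) = adim s := by
      rw [adim, ← h1, direction_affineSpan]
    omega
  have hcard2 : k + 2 ≤ Fintype.card t := by omega
  have : Nonempty (Fin (k + 2) ↪ t) := by
    rw [Function.Embedding.nonempty_iff_card_le]
    simpa using hcard2
  obtain ⟨e⟩ := this
  refine ⟨fun i => (e i : E), fun i => hts (e i).2, ?_⟩
  exact htind.comp_embedding e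

/-- Affine dimension is lower semicontinuous along Hausdorff convergence. -/
lemma adim_le_of_hausdorff_lim {C : Set E} (hCne : C.Nonempty) (hCcomp : IsCompact C)
    {D : ℕ → Set E} (hDne : ∀ n, (D n).Nonempty) (hDbdd : ∀ n, Bornology.IsBounded (D n))
    (hadim : ∀ n, adim (D n) ≤ k)
    (hdist : Tendsto (fun n => hausdorffDist (D n) C) atTop (nhds 0)) : adim C ≤ k := by
  classical
  by_contra hC
  obtain ⟨p, hpmem, hpind⟩ := exists_affineIndependent_points hC
  have fin : ∀ n, EMetric.hausdorffEdist (D n) C ≠ ⊤ := fun n =>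
    hausdorffEdist_ne_top_of_nonempty_of_bounded (hDne n) hCne (hDbdd n) hCcomp.isBounded
  have hlt : ∀ n, hausdorffDist (D n) C < hausdorffDist (D n) C + ((n : ℝ) + 1)⁻¹ := by
    intro n
    have : (0 : ℝ) < ((n : ℝ) + 1)⁻¹ := by positivity
    linarith
  have hq : ∀ n (i : Fin (k + 2)), ∃ x ∈ D n,
      dist x (p i) < hausdorffDist (D n) C + ((n : ℝ) + 1)⁻¹ := fun n i =>
    exists_dist_lt_of_hausdorffDist_lt' (hpmem i) (hlt n) (fin n)
  choose q hqmem hqdist using hq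
  have hr0 : Tendsto (fun n => hausdorffDist (D n) C + ((n : ℝ) + 1)⁻¹) atTop (nhds 0) := by
    have h2 : Tendsto (fun n : ℕ => ((n : ℝ) + 1)⁻¹) atTop (nhds 0) :=
      tendsto_one_div_add_atTop_nhds_zero_nat.congr (by intro n; simp [one_div])
    simpa using hdist.add h2
  have hqt : ∀ i, Tendsto (fun n => q n i) atTop (nhds (p i)) := by
    intro i
    rw [tendsto_iff_dist_tendsto_zero]
    refine squeeze_zero (fun n => dist_nonneg) (fun n => (hqdist n i).le) hr0
  have hli : LinearIndependent ℝ
      (fun i : {x : Fin (k + 2) // x ≠ 0} => p i -ᵥ p 0) :=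
    (affineIndependent_iff_linearIndependent_vsub ℝ p 0).mp hpind
  have htendv : Tendsto (fun n => fun i : {x : Fin (k + 2) // x ≠ 0} => q n i -ᵥ q n 0)
      atTop (nhds (fun i : {x : Fin (k + 2) // x ≠ 0} => p i -ᵥ p 0)) := by
    rw [tendsto_pi_nhds]
    intro i
    exact (hqt i).vsub (hqt 0)
  have hev : ∀ᶠ n in atTop, LinearIndependent ℝ
      (fun i : {x : Fin (k + 2) // x ≠ 0} => q n i -ᵥ q n 0) :=
    htendv.eventually hli.eventually
  obtain ⟨n, hn⟩ := hev.exists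
  have hqind : AffineIndependent ℝ (q n) :=
    (affineIndependent_iff_linearIndependent_vsub ℝ (q n) 0).mpr hn
  have hrank : Module.finrank ℝ (vectorSpan ℝ (Set.range (q n))) = k + 1 :=
    hqind.finrank_vectorSpan (by simp)
  have hle : vectorSpan ℝ (Set.range (q n)) ≤ vectorSpan ℝ (D n) :=
    vectorSpan_mono ℝ (Set.range_subset_iff.mpr fun i => hqmem n i)
  have hfin : Module.finrank ℝ (vectorSpan ℝ (Set.range (q n)))
      ≤ Module.finrank ℝ (vectorSpan ℝ (D n)) := Submodule.finrank_mono hle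
  have h9 : adim (D n) = Module.finrank ℝ (vectorSpan ℝ (D n)) := by
    rw [adim, direction_affineSpan]
  have h10 := hadim n
  omega

end Aux

theorem stmt19 (d k : ℕ) (hk : 1 ≤ k) (X : Set (EuclideanSpace ℝ (Fin d)))
    (hX : IsCompact X) (hXconv : Convex ℝ X) (hint : (interior X).Nonempty)
    (xbar : EuclideanSpace ℝ (Fin d)) (hxbar : xbar ∈ interior X)
    (xb : ℕ → EuclideanSpace ℝ (Fin d)) (hxb : ∀ n, xb n ∈ X)
    (hconv : Tendsto xb atTop (nhds xbar)) :
    (∀ C ∈ CCset X xbar k, ∃ Cn : ℕ → Set (EuclideanSpace ℝ (Fin d)),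
        (∀ n, Cn n ∈ CCset X (xb n) k) ∧
        Tendsto (fun n => hausdorffDist (Cn n) C) atTop (nhds 0)) ∧
    (∀ Cn : ℕ → Set (EuclideanSpace ℝ (Fin d)), (∀ n, Cn n ∈ CCset X (xb n) k) →
      ∀ C : Set (EuclideanSpace ℝ (Fin d)), C.Nonempty → IsCompact C →
        (∃ φ : ℕ → ℕ, StrictMono φ ∧
          Tendsto (fun n => hausdorffDist (Cn (φ n)) C) atTop (nhds 0)) →
        C ∈ CCset X xbar k) := by
  classical
  have hxbarX : xbar ∈ X := interior_subset hxbar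
  have hXne : X.Nonempty := ⟨xbar, hxbarX⟩
  -- a closed ball around xbar inside X
  obtain ⟨ε, hε, hball⟩ : ∃ ε > 0, ball xbar ε ⊆ X := by
    rw [mem_interior_iff_mem_nhds, Metric.mem_nhds_iff] at hxbar
    exact hxbar
  set r : ℝ := ε / 2 with hr_def
  have hr : 0 < r := by positivity
  have hcball : closedBall xbar r ⊆ X :=
    (closedBall_subset_ball (by simp [hr_def]; linarith)).trans hball
  -- a bound on X
  obtain ⟨M, hM⟩ := hX.isBounded.subset_closedBall xbar
  have hM0 : 0 ≤ M := by
    have := hM hxbarX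
    simpa using this
  constructor
  · -- Part (i)
    intro C hC
    obtain ⟨hCX, hCcl, hCconv, hxbarC, hCadim⟩ := hC
    have hCcomp : IsCompact C := hX.of_isClosed_subset hCcl hCX
    set t : ℕ → ℝ := fun n => min 1 (dist (xb n) xbar / r) with ht_def
    have ht0 : ∀ n, 0 ≤ t n := fun n => le_min zero_le_one (by positivity)
    have ht1 : ∀ n, t n ≤ 1 := fun n => min_le_left _ _
    have htle : ∀ n, t n ≤ dist (xb n) xbar / r := fun n => min_le_right _ _
    -- affine maps
    set f : ℕ → (EuclideanSpace ℝ (Fin d)) →ᵃ[ℝ] (EuclideanSpace ℝ (Fin d)) := fun n =>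
      { toFun := fun x => (1 - t n) • (x - xbar) + xb n
        linear := (1 - t n) • LinearMap.id
        map_vadd' := by
          intro p v
          simp only [LinearMap.smul_apply, LinearMap.id_coe, id_eq, vadd_eq_add]
          rw [add_sub_assoc]
          rw [smul_add]
          abel } with hf_def
    have hfval : ∀ n x, f n x = (1 - t n) • (x - xbar) + xb n := fun n x => rfl
    refine ⟨fun n => f n '' C, fun n => ?_, ?_⟩
    · have hsubX : f n '' C ⊆ X := by
        rintro _ ⟨c, hc, rfl⟩
        rw [hfval]
        rcases lt_or_ge (dist (xb n) xbar) r with hs | hs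
        · rcases eq_or_lt_of_le (dist_nonneg : (0:ℝ) ≤ dist (xb n) xbar) with hs0 | hs0
          · -- xb n = xbar
            have hxx : xb n = xbar := dist_eq_zero.mp hs0.symm
            have htn : t n = 0 := by
              simp [ht_def, hxx, hr.ne']
            rw [htn, hxx]
            simpa using hCX hc
          · -- 0 < dist < r
            set s := dist (xb n) xbar with hs_def
            have htn : t n = s / r := by
              apply min_eq_right
              rw [div_le_one hr]
              exact hs.le
            have htnpos : 0 < t n := by rw [htn]; positivity
            set w : EuclideanSpace ℝ (Fin d) := xbar + (t n)⁻¹ • (xb n - xbar) with hw_def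
            have hwX : w ∈ X := by
              apply hcball
              rw [mem_closedBall, hw_def]
              have : dist (xbar + (t n)⁻¹ • (xb n - xbar)) xbar
                  = (t n)⁻¹ * dist (xb n) xbar := by
                rw [dist_eq_norm]
                simp only [add_sub_cancel_left, norm_smul, Real.norm_eq_abs,
                  abs_of_pos (inv_pos.mpr htnpos)]
                rw [← dist_eq_norm]
              have hss : dist (xb n) xbar = s := rfl
              rw [this, htn, inv_div, hss, div_mul_cancel₀ _ hs0.ne']
            have hw2 : t n • ((t n)⁻¹ • (xb n - xbar)) = xb n - xbar :=
              smul_inv_smul₀ htnpos.ne' _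
            have heq : (1 - t n) • (c - xbar) + xb n = (1 - t n) • c + t n • w := by
              rw [hw_def, smul_add, hw2]
              module
            rw [heq]
            exact hXconv (hCX hc) hwX (by linarith [ht1 n]) (ht0 n) (by ring)
        · -- dist ≥ r : t n = 1
          have htn : t n = 1 := by
            apply min_eq_left
            rw [le_div_iff₀ hr]
            simpa using hs
          rw [htn]
          simpa using hxb n
      refine ⟨hsubX, ?_, hCconv.affine_image (f n), ⟨xbar, hxbarC, by simp [hfval]⟩, ?_⟩
      · exact (hCcomp.image (f n).continuous_of_finiteDimensional).isClosed
      · -- adim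
        have h1 : affineSpan ℝ (f n '' C) = (affineSpan ℝ C).map (f n) :=
          (AffineSubspace.map_span (f n) C).symm
        rw [adim, h1, AffineSubspace.map_direction]
        exact le_trans (Submodule.finrank_map_le _ _) hCadim
    · -- Hausdorff convergence
      have hbound : ∀ n, hausdorffDist (f n '' C) C ≤ dist (xb n) xbar * (1 + M / r) := by
        intro n
        have hkey : ∀ c ∈ C, dist (f n c) c ≤ dist (xb n) xbar * (1 + M / r) := by
          intro c hc
          rw [hfval, dist_eq_norm]
          have heq : (1 - t n) • (c - xbar) + xb n - c
              = (xb n - xbar) - t n • (c - xbar) := by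
            rw [sub_smul, one_smul]
            abel
          rw [heq]
          have h1 : ‖(xb n - xbar) - t n • (c - xbar)‖
              ≤ ‖xb n - xbar‖ + t n * ‖c - xbar‖ := by
            refine (norm_sub_le _ _).trans ?_
            rw [norm_smul, Real.norm_eq_abs, abs_of_nonneg (ht0 n)]
          have h2 : ‖c - xbar‖ ≤ M := by
            rw [← dist_eq_norm]
            exact hM (hCX hc)
          have h3 : t n * ‖c - xbar‖ ≤ (dist (xb n) xbar / r) * M := by
            apply mul_le_mul (htle n) h2 (norm_nonneg _) (by positivity)
          calc ‖(xb n - xbar) - t n • (c - xbar)‖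
              ≤ ‖xb n - xbar‖ + (dist (xb n) xbar / r) * M := by linarith
            _ = dist (xb n) xbar * (1 + M / r) := by
                rw [← dist_eq_norm]; ring
        have hnn : 0 ≤ dist (xb n) xbar * (1 + M / r) := by positivity
        apply hausdorffDist_le_of_mem_dist hnn
        · rintro _ ⟨c, hc, rfl⟩
          exact ⟨c, hc, hkey c hc⟩
        · intro c hc
          exact ⟨f n c, Set.mem_image_of_mem _ hc, by rw [dist_comm]; exact hkey c hc⟩
      have hB : Tendsto (fun n => dist (xb n) xbar * (1 + M / r)) atTop (nhds 0) := by
        have := (tendsto_iff_dist_tendsto_zero.mp hconv).mul_const (1 + M / r)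
        simpa using this
      exact squeeze_zero (fun n => hausdorffDist_nonneg) hbound hB
  · -- Part (ii)
    rintro Cn hCn C hCne hCcomp ⟨φ, hφ, hH⟩
    set D : ℕ → Set (EuclideanSpace ℝ (Fin d)) := fun n => Cn (φ n) with hD_def
    have hDX : ∀ n, D n ⊆ X := fun n => (hCn (φ n)).1
    have hDconv : ∀ n, Convex ℝ (D n) := fun n => (hCn (φ n)).2.2.1
    have hDmem : ∀ n, xb (φ n) ∈ D n := fun n => (hCn (φ n)).2.2.2.1
    have hDadim : ∀ n, adim (D n) ≤ k := fun n => (hCn (φ n)).2.2.2.2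
    have hDne : ∀ n, (D n).Nonempty := fun n => ⟨_, hDmem n⟩
    have hDbdd : ∀ n, Bornology.IsBounded (D n) := fun n =>
      hX.isBounded.subset (hDX n)
    have fin : ∀ n, EMetric.hausdorffEdist (D n) C ≠ ⊤ := fun n =>
      hausdorffEdist_ne_top_of_nonempty_of_bounded (hDne n) hCne (hDbdd n) hCcomp.isBounded
    have hHn : ∀ n, (0:ℝ) ≤ hausdorffDist (D n) C := fun n => hausdorffDist_nonneg
    -- C ⊆ X
    have hCX : C ⊆ X := by
      intro x hx
      have h1 : ∀ n, infDist x X ≤ hausdorffDist (D n) C := by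
        intro n
        have h2 : infDist x (D n) ≤ hausdorffDist C (D n) :=
          infDist_le_hausdorffDist_of_mem hx (by rw [EMetric.hausdorffEdist_comm]; exact fin n)
        have h3 : infDist x X ≤ infDist x (D n) :=
          infDist_le_infDist_of_subset (hDX n) (hDne n)
        rw [hausdorffDist_comm] at h2
        linarith
      have h4 : infDist x X ≤ 0 := ge_of_tendsto' hH h1
      have h5 : infDist x X = 0 := le_antisymm h4 infDist_nonneg
      exact (hX.isClosed.mem_iff_infDist_zero hXne).mpr h5
    -- xbar ∈ C
    have hxbC : xbar ∈ C := by
      have hxφ : Tendsto (fun n => xb (φ n)) atTop (nhds xbar) :=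
        hconv.comp hφ.tendsto_atTop
      have h1 : ∀ n, infDist xbar C ≤ hausdorffDist (D n) C + dist xbar (xb (φ n)) := by
        intro n
        have h2 : infDist (xb (φ n)) C ≤ hausdorffDist (D n) C :=
          infDist_le_hausdorffDist_of_mem (hDmem n) (fin n)
        have h3 : infDist xbar C ≤ infDist (xb (φ n)) C + dist xbar (xb (φ n)) :=
          infDist_le_infDist_add_dist
        linarith
      have h4 : Tendsto (fun n => hausdorffDist (D n) C + dist xbar (xb (φ n)))
          atTop (nhds 0) := by
        have h5 : Tendsto (fun n => dist xbar (xb (φ n))) atTop (nhds 0) := by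
          have := tendsto_iff_dist_tendsto_zero.mp hxφ
          simpa [dist_comm] using this
        simpa using hH.add h5
      have h6 : infDist xbar C ≤ 0 := ge_of_tendsto' h4 h1
      exact (hCcomp.isClosed.mem_iff_infDist_zero hCne).mpr
        (le_antisymm h6 infDist_nonneg)
    -- Convexity of C
    have hCconv : Convex ℝ C := by
      intro x hx y hy a b ha hb hab
      have hlt : ∀ n, hausdorffDist (D n) C < hausdorffDist (D n) C + ((n : ℝ) + 1)⁻¹ := by
        intro n
        have : (0 : ℝ) < ((n : ℝ) + 1)⁻¹ := by positivity
        linarith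
      have hu : ∀ n, ∃ u ∈ D n, dist u x < hausdorffDist (D n) C + ((n : ℝ) + 1)⁻¹ :=
        fun n => exists_dist_lt_of_hausdorffDist_lt' hx (hlt n) (fin n)
      have hv : ∀ n, ∃ v ∈ D n, dist v y < hausdorffDist (D n) C + ((n : ℝ) + 1)⁻¹ :=
        fun n => exists_dist_lt_of_hausdorffDist_lt' hy (hlt n) (fin n)
      choose u hu1 hu2 using hu
      choose v hv1 hv2 using hv
      set z := a • x + b • y with hz_def
      have h1 : ∀ n, infDist z C
          ≤ 2 * (hausdorffDist (D n) C + ((n : ℝ) + 1)⁻¹) := by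
        intro n
        set zn := a • u n + b • v n with hzn_def
        have hznD : zn ∈ D n := hDconv n (hu1 n) (hv1 n) ha hb hab
        have h2 : infDist zn C ≤ hausdorffDist (D n) C :=
          infDist_le_hausdorffDist_of_mem hznD (fin n)
        have h3 : infDist z C ≤ infDist zn C + dist z zn := infDist_le_infDist_add_dist
        have h4 : dist z zn ≤ a * dist x (u n) + b * dist y (v n) := by
          calc dist z zn ≤ dist (a • x) (a • u n) + dist (b • y) (b • v n) :=
                dist_add_add_le _ _ _ _
            _ = a * dist x (u n) + b * dist y (v n) := by
                rw [dist_smul₀, dist_smul₀, Real.norm_eq_abs, Real.norm_eq_abs,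
                  abs_of_nonneg ha, abs_of_nonneg hb]
        have h5 : a * dist x (u n) + b * dist y (v n)
            ≤ hausdorffDist (D n) C + ((n : ℝ) + 1)⁻¹ := by
          have hxu := (hu2 n)
          have hyv := (hv2 n)
          rw [dist_comm] at hxu hyv
          calc a * dist x (u n) + b * dist y (v n)
              ≤ a * (hausdorffDist (D n) C + ((n : ℝ) + 1)⁻¹)
                + b * (hausdorffDist (D n) C + ((n : ℝ) + 1)⁻¹) := by
                have hrn : (0:ℝ) ≤ hausdorffDist (D n) C + ((n : ℝ) + 1)⁻¹ := by
                  have := hHn n; positivity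
                exact add_le_add (mul_le_mul_of_nonneg_left hxu.le ha)
                  (mul_le_mul_of_nonneg_left hyv.le hb)
            _ = hausdorffDist (D n) C + ((n : ℝ) + 1)⁻¹ := by
                rw [← add_mul, hab, one_mul]
        have hHnn := hHn n
        have hinv : (0:ℝ) ≤ ((n : ℝ) + 1)⁻¹ := by positivity
        linarith
      have h6 : Tendsto (fun n => 2 * (hausdorffDist (D n) C + ((n : ℝ) + 1)⁻¹))
          atTop (nhds 0) := by
        have h7 : Tendsto (fun n : ℕ => ((n : ℝ) + 1)⁻¹) atTop (nhds 0) :=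
          tendsto_one_div_add_atTop_nhds_zero_nat.congr (by intro n; simp [one_div])
        have := (hH.add h7).const_mul (2:ℝ)
        simpa using this
      have h8 : infDist z C ≤ 0 := ge_of_tendsto' h6 h1
      exact (hCcomp.isClosed.mem_iff_infDist_zero hCne).mpr
        (le_antisymm h8 infDist_nonneg)
    exact ⟨hCX, hCcomp.isClosed, hCconv, hxbC,
      adim_le_of_hausdorff_lim hCne hCcomp hDne hDbdd hDadim hH⟩
end
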